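/- For every positive integer n, ∏_{i=0}^{n-1} (3i+1)!/(n+i)! is a positive integer. -/

import Mathlib

open Nat

open Finset in
private lemma asm_sum_shift_periodic (f : ℕ → ℕ) (m : ℕ) (hf : ∀ i, f (i + m) = f i) :
    ∀ a, ∑ i ∈ range m, f (a + i) = ∑ i ∈ range m, f i := by
  intro a
  induction a with
  | zero => simp
  | succ a ih =>
    have h1 : ∑ i ∈ range (m+1), f (a + i) = (∑ i ∈ range m, f (a + i)) + f (a + m) :=
      Finset.sum_range_succ _ m
    have h2 : ∑ i ∈ range (m+1), f (a + i) = (∑ i ∈ range m, f (a + (i+1))) + f (a + 0) :=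
      Finset.sum_range_succ' _ m
    have h3 : ∀ i, f (a + (i+1)) = f (a + 1 + i) := by intro i; ring_nf
    have h4 : f (a + m) = f a := hf a
    rw [Finset.sum_congr rfl (fun i _ => h3 i)] at h2
    simp only [Nat.add_zero] at h2
    omega

open Finset in
private lemma asm_count_sum (t : ℕ) : ∀ n, ∑ i ∈ range n, (if t ≤ i then 1 else 0) = n - t := by
  intro n
  induction n with
  | zero => simp
  | succ k ih => rw [Finset.sum_range_succ, ih]; split_ifs with h <;> omega

open Finset in
private lemma asm_gauss (n : ℕ) : 2 * ∑ i ∈ range n, i + n = n * n := by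
  induction n with
  | zero => simp
  | succ k ih => rw [Finset.sum_range_succ]; nlinarith [ih]

open Finset in
private lemma asm_sum_div_add_mod (m n : ℕ) (g : ℕ → ℕ) :
    m * (∑ i ∈ range n, g i / m) + (∑ i ∈ range n, g i % m) = ∑ i ∈ range n, g i := by
  rw [Finset.mul_sum, ← Finset.sum_add_distrib]
  exact Finset.sum_congr rfl (fun i _ => Nat.div_add_mod _ m)

open Finset in
private lemma asm_sums_eq (n : ℕ) : ∑ i ∈ range n, (3*i+1) = ∑ i ∈ range n, (n+i) := by
  have g := asm_gauss n
  have e1 : ∑ i ∈ range n, (3*i+1) = 3 * (∑ i ∈ range n, i) + n := by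
    rw [Finset.sum_add_distrib, Finset.sum_const, ← Finset.mul_sum]; simp
  have e2 : ∑ i ∈ range n, (n+i) = n * n + ∑ i ∈ range n, i := by
    rw [Finset.sum_add_distrib, Finset.sum_const]; simp [Finset.card_range, Nat.smul_one_eq_cast]
  omega

private lemma asm_div3_eq (m i : ℕ) (hi : i < m) :
    (3*i+1)/m = (if (m+1)/3 ≤ i then 1 else 0) + (if (2*m+1)/3 ≤ i then 1 else 0) := by
  split_ifs with h1 h2 h2
  · exact Nat.div_eq_of_lt_le (by omega) (by omega)
  · exact Nat.div_eq_of_lt_le (by omega) (by omega)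
  · omega
  · exact Nat.div_eq_of_lt (by omega)

open Finset in
private lemma asm_sumdiv3 (m : ℕ) (hm : 1 ≤ m) : ∑ i ∈ range m, (3*i+1)/m = m := by
  rw [Finset.sum_congr rfl (fun i hi => asm_div3_eq m i (Finset.mem_range.mp hi))]
  rw [Finset.sum_add_distrib, asm_count_sum, asm_count_sum]
  omega

open Finset in
private lemma asm_summod3 (m : ℕ) : ∑ i ∈ range m, (3*i+1)%m = ∑ i ∈ range m, i%m := by
  rcases Nat.eq_zero_or_pos m with h | hm
  · subst h; simp
  have h1 := asm_sum_div_add_mod m m (fun i => 3*i+1)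
  rw [asm_sumdiv3 m hm] at h1
  have e1 : ∑ i ∈ range m, (3*i+1) = 3 * (∑ i ∈ range m, i) + m := by
    rw [Finset.sum_add_distrib, Finset.sum_const, ← Finset.mul_sum]; simp
  have e2 : ∑ i ∈ range m, i % m = ∑ i ∈ range m, i :=
    Finset.sum_congr rfl (fun i hi => Nat.mod_eq_of_lt (Finset.mem_range.mp hi))
  have g := asm_gauss m
  omega

open Finset in
private lemma asm_divn_eq (m n i : ℕ) (hn : n ≤ m) (hi : i < n) :
    (n+i)/m = (if m - n ≤ i then 1 else 0) := by
  split_ifs with h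
  · exact Nat.div_eq_of_lt_le (by omega) (by omega)
  · exact Nat.div_eq_of_lt (by omega)

open Finset in
private lemma asm_keyfloor_base (m n : ℕ) (hn : n ≤ m) :
    ∑ i ∈ range n, (n+i)/m ≤ ∑ i ∈ range n, (3*i+1)/m := by
  have l : ∑ i ∈ range n, (n+i)/m = n - (m - n) := by
    rw [Finset.sum_congr rfl (fun i hi => asm_divn_eq m n i hn (Finset.mem_range.mp hi))]
    exact asm_count_sum _ n
  have r : ∑ i ∈ range n, (3*i+1)/m = (n - (m+1)/3) + (n - (2*m+1)/3) := by
    rw [Finset.sum_congr rfl (fun i hi =>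
      asm_div3_eq m i (lt_of_lt_of_le (Finset.mem_range.mp hi) hn))]
    rw [Finset.sum_add_distrib, asm_count_sum, asm_count_sum]
  rw [l, r]
  omega

open Finset in
private lemma asm_keymod (m : ℕ) (hm : 1 ≤ m) :
    ∀ n, ∑ i ∈ range n, (3*i+1)%m ≤ ∑ i ∈ range n, (n+i)%m := by
  intro n
  induction n using Nat.strong_induction_on with
  | _ n ih =>
    rcases le_or_gt n m with hnm | hmn
    · -- base case : n ≤ m
      have hf := asm_keyfloor_base m n hnm
      have h1 := asm_sum_div_add_mod m n (fun i => 3*i+1)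
      have h2 := asm_sum_div_add_mod m n (fun i => n+i)
      have hs := asm_sums_eq n
      have hle : m * (∑ i ∈ range n, (n+i)/m) ≤ m * (∑ i ∈ range n, (3*i+1)/m) :=
        Nat.mul_le_mul_left _ hf
      omega
    · -- inductive step : m < n, reduce to n - m
      set n' := n - m with hn'
      have hsplit : n = n' + m := by omega
      have ihn := ih n' (by omega)
      -- LHS split
      have l1 : ∑ i ∈ range n, (3*i+1)%m
          = (∑ i ∈ range n', (3*i+1)%m) + ∑ i ∈ range m, (3*(n'+i)+1)%m := by
        rw [hsplit, Finset.sum_range_add]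
      have l2 : ∑ i ∈ range m, (3*(n'+i)+1)%m = ∑ i ∈ range m, i%m := by
        have hper : ∀ i, (3*(i+m)+1)%m = (3*i+1)%m := by
          intro i
          have : 3*(i+m)+1 = (3*i+1) + m*3 := by ring
          rw [this, Nat.add_mul_mod_self_left]
        have := asm_sum_shift_periodic (fun i => (3*i+1)%m) m hper n'
        simpa using this.trans (asm_summod3 m)
      -- RHS rewrite and split
      have r0 : ∑ i ∈ range n, (n+i)%m = ∑ i ∈ range n, (n'+i)%m := by
        refine Finset.sum_congr rfl (fun i _ => ?_)
        have : n + i = (n' + i) + m := by omega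
        rw [this, Nat.add_mod_right]
      have r1 : ∑ i ∈ range n, (n'+i)%m
          = (∑ i ∈ range n', (n'+i)%m) + ∑ i ∈ range m, (n'+(n'+i))%m := by
        rw [hsplit, Finset.sum_range_add]
      have r2 : ∑ i ∈ range m, (n'+(n'+i))%m = ∑ i ∈ range m, i%m := by
        have hper : ∀ i, (i+m)%m = i%m := fun i => Nat.add_mod_right i m
        have := asm_sum_shift_periodic (fun i => i%m) m hper (n'+n')
        have h' : ∑ i ∈ range m, (n'+(n'+i))%m = ∑ i ∈ range m, (n'+n'+i)%m := by
          refine Finset.sum_congr rfl (fun i _ => ?_)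
          ring_nf
        rw [h']
        simpa using this
      rw [l1, l2, r0, r1, r2]
      omega

open Finset in
private lemma asm_keyfloor (m : ℕ) (hm : 1 ≤ m) (n : ℕ) :
    ∑ i ∈ range n, (n+i)/m ≤ ∑ i ∈ range n, (3*i+1)/m := by
  have hmod := asm_keymod m hm n
  have h1 := asm_sum_div_add_mod m n (fun i => 3*i+1)
  have h2 := asm_sum_div_add_mod m n (fun i => n+i)
  have hs := asm_sums_eq n
  have hle : m * (∑ i ∈ range n, (n+i)/m) ≤ m * (∑ i ∈ range n, (3*i+1)/m) := by omega
  exact Nat.le_of_mul_le_mul_left hle (by omega)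

open Finset in
private lemma asm_dvd (n : ℕ) :
    (∏ i ∈ range n, (n+i)!) ∣ (∏ i ∈ range n, (3*i+1)!) := by
  have hD : ∀ i ∈ range n, (n+i)! ≠ 0 := fun i _ => (Nat.factorial_pos _).ne'
  have hN : ∀ i ∈ range n, (3*i+1)! ≠ 0 := fun i _ => (Nat.factorial_pos _).ne'
  rw [← Nat.factorization_le_iff_dvd (Finset.prod_ne_zero_iff.mpr hD)
      (Finset.prod_ne_zero_iff.mpr hN)]
  rw [Nat.factorization_prod hD, Nat.factorization_prod hN]
  intro p
  rw [Finset.sum_apply', Finset.sum_apply']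
  by_cases hp : p.Prime
  · haveI : Fact p.Prime := ⟨hp⟩
    set b := 3*n + 1 with hb
    have hleg : ∀ k : ℕ, k ≤ 3*n → (k !).factorization p = ∑ j ∈ Finset.Ico 1 b, k / p ^ j := by
      intro k hk
      rw [Nat.factorization_def _ hp]
      exact padicValNat_factorial (by
        calc Nat.log p k ≤ k := Nat.log_le_self p k
        _ < b := by omega)
    have hL : ∀ i ∈ range n, ((n+i)!).factorization p = ∑ j ∈ Finset.Ico 1 b, (n+i) / p ^ j := by
      intro i hi
      exact hleg _ (by have := Finset.mem_range.mp hi; omega)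
    have hR : ∀ i ∈ range n, ((3*i+1)!).factorization p = ∑ j ∈ Finset.Ico 1 b, (3*i+1) / p ^ j := by
      intro i hi
      exact hleg _ (by have := Finset.mem_range.mp hi; omega)
    rw [Finset.sum_congr rfl hL, Finset.sum_congr rfl hR, Finset.sum_comm, Finset.sum_comm (s := range n)]
    refine Finset.sum_le_sum (fun j hj => ?_)
    have hj1 : 1 ≤ j := (Finset.mem_Ico.mp hj).1
    have hpj : 1 ≤ p ^ j := Nat.one_le_pow j p hp.pos
    exact asm_keyfloor (p ^ j) hpj n
  · simp [Nat.factorization_eq_zero_of_not_prime _ hp]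

/-- The alternating sign matrix number A_n = ∏_{i=0}^{n-1} (3i+1)!/(n+i)! is a
positive integer. -/
theorem stmt_12 (n : ℕ) (hn : 1 ≤ n) :
    ∃ N : ℕ, 0 < N ∧ (N : ℚ) =
      ∏ i ∈ Finset.range n, ((3 * i + 1)! : ℚ) / ((n + i)!) := by
  have hdvd := asm_dvd n
  have hDpos : 0 < ∏ i ∈ Finset.range n, (n+i)! :=
    Finset.prod_pos (fun i _ => Nat.factorial_pos _)
  have hNpos : 0 < ∏ i ∈ Finset.range n, (3*i+1)! :=
    Finset.prod_pos (fun i _ => Nat.factorial_pos _)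
  refine ⟨(∏ i ∈ Finset.range n, (3*i+1)!) / (∏ i ∈ Finset.range n, (n+i)!),
    Nat.div_pos (Nat.le_of_dvd hNpos hdvd) hDpos, ?_⟩
  rw [Nat.cast_div hdvd (by exact_mod_cast hDpos.ne')]
  rw [Nat.cast_prod, Nat.cast_prod, ← Finset.prod_div_distrib]
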